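/- arXiv:1501.03122 — 2 statements merged into one kernel-verified Lean document; each statement's English description precedes it below -/
import Mathlib

section
/- Let P = (f^{i,j}, g^j) and P̃ = (f̃^{i,j}, g̃^j) (1 ≤ i,j ≤ m) be two families of càdlàg functions, each satisfying hypotheses (H). Assume f^{i,j}(x) ≤ f̃^{i,j}(x) and g^j(t) ≤ g̃^j(t) for all i, j, x, t, and that for every j either f^{i,j}(x) < f̃^{i,j}(x) for all i and all x ≥ 0, or g^j(t) < g̃^j(t) for all t ≥ 0. If h and h̃ are non-negative solutions on [0,∞) of the time-change system driven by P and by P̃ respectively, with primitives c^j(t) = ∫_0^t h^j(s) ds and c̃^j(t) = ∫_0^t h̃^j(s) ds, then c^j(t) ≤ c̃^j(t) for all j and all t ≥ 0. -/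
open MeasureTheory Filter Function Set
open scoped ENNReal Topology

noncomputable section

/-- A function is càdlàg on `[0, τ)`: right-continuous at every `t ∈ [0, τ)` and with
left limits at every `t ∈ (0, τ)` (times are compared with `τ : ℝ≥0∞` via `ENNReal.ofReal`). -/
def CadlagOn (f : ℝ → ℝ) (τ : ℝ≥0∞) : Prop :=
  (∀ t : ℝ, 0 ≤ t → ENNReal.ofReal t < τ →
    Tendsto f (nhdsWithin t (Set.Ioi t)) (nhds (f t))) ∧
  (∀ t : ℝ, 0 < t → ENNReal.ofReal t < τ →
    ∃ l : ℝ, Tendsto f (nhdsWithin t (Set.Iio t)) (nhds l))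

/-- Càdlàg on all of `[0, ∞)`. -/
def Cadlag (f : ℝ → ℝ) : Prop := CadlagOn f ⊤

/-- Hypotheses (H) on the driving functions of the time-change system. -/
structure HypH (m : ℕ) (f : Fin m → Fin m → ℝ → ℝ) (g : Fin m → ℝ → ℝ) : Prop where
  cadlag_f : ∀ i j, Cadlag (f i j)
  cadlag_g : ∀ j, Cadlag (g j)
  /-- H1: the diagonal entries have no negative jumps -/
  no_neg_jumps : ∀ i, ∀ t : ℝ, 0 < t → Function.leftLim (f i i) t ≤ f i i t
  /-- H1: the off-diagonal entries are non-decreasing -/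
  mono_f : ∀ i j, i ≠ j → MonotoneOn (f i j) (Set.Ici 0)
  /-- H2 -/
  mono_g : ∀ j, MonotoneOn (g j) (Set.Ici 0)
  /-- H3 -/
  init_nonneg : ∀ j, 0 ≤ g j 0 + ∑ i, f i j 0

/-- The primitive `c(t) = ∫_0^t h(s) ds`. -/
def prim (h : ℝ → ℝ) (t : ℝ) : ℝ := ∫ s in (0:ℝ)..t, h s

/-- `h` solves the time-change system `h^j = Σ_i f^{i,j}∘c^i + g^j` on `[0, τ)`,
where `c^i` is the primitive of `h^i`. -/
def IsSolutionOn (m : ℕ) (f : Fin m → Fin m → ℝ → ℝ) (g : Fin m → ℝ → ℝ)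
    (τ : ℝ≥0∞) (h : Fin m → ℝ → ℝ) : Prop :=
  (∀ j, CadlagOn (h j) τ) ∧
  ∀ j, ∀ t : ℝ, 0 ≤ t → ENNReal.ofReal t < τ →
    h j t = (∑ i, f i j (prim (h i) t)) + g j t

/-- Non-negativity of a solution on `[0, τ)`. -/
def NonnegOn (m : ℕ) (τ : ℝ≥0∞) (h : Fin m → ℝ → ℝ) : Prop :=
  ∀ j, ∀ t : ℝ, 0 ≤ t → ENNReal.ofReal t < τ → 0 ≤ h j t

/-- A càdlàg function is bounded on `[0, b]`. -/
lemma Cadlag.bounded {f : ℝ → ℝ} (hf : Cadlag f) {b : ℝ} (hb : 0 ≤ b) :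
    ∃ M : ℝ, ∀ t ∈ Set.Icc (0:ℝ) b, |f t| ≤ M := by
  obtain ⟨hr, hl⟩ := hf
  have key : ∀ x ∈ Set.Icc (0:ℝ) b, ∃ M : ℝ, ∃ U : Set ℝ, U ∈ 𝓝 x ∧
      ∀ y ∈ U ∩ Set.Icc (0:ℝ) b, |f y| ≤ M := by
    intro x hx
    have hx0 : (0:ℝ) ≤ x := hx.1
    -- right side
    have h1 : ∀ᶠ y in 𝓝[>] x, |f y| ≤ |f x| + 1 := by
      have h2 := hr x hx0 (by simp)
      have h3 : ∀ᶠ y in 𝓝[>] x, f y ∈ Metric.ball (f x) 1 :=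
        h2 (Metric.ball_mem_nhds _ one_pos)
      filter_upwards [h3] with y hy
      have : |f y - f x| < 1 := by simpa [Real.dist_eq] using hy
      have h4 : |f y| ≤ |f y - f x| + |f x| := by
        simpa using abs_add_le (f y - f x) (f x)
      linarith
    obtain ⟨u, hu, husub⟩ := mem_nhdsGT_iff_exists_Ioo_subset.1 h1
    -- left side
    have hleft : ∃ v : ℝ, v < x ∧ ∃ Ml : ℝ, ∀ y ∈ Set.Ioo v x ∩ Set.Icc (0:ℝ) b, |f y| ≤ Ml := by
      rcases eq_or_lt_of_le hx0 with hx0' | hx0'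
      · refine ⟨-1, by linarith, 0, ?_⟩
        rintro y ⟨hy1, hy2⟩
        exact absurd (hy2.1.trans_lt (hy1.2.trans_eq hx0'.symm)) (lt_irrefl _)
      · obtain ⟨l, hlt⟩ := hl x hx0' (by simp)
        have h1 : ∀ᶠ y in 𝓝[<] x, |f y| ≤ |l| + 1 := by
          have h3 : ∀ᶠ y in 𝓝[<] x, f y ∈ Metric.ball l 1 :=
            hlt (Metric.ball_mem_nhds _ one_pos)
          filter_upwards [h3] with y hy
          have : |f y - l| < 1 := by simpa [Real.dist_eq] using hy
          have h4 : |f y| ≤ |f y - l| + |l| := by simpa using abs_add_le (f y - l) l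
          linarith
        obtain ⟨v, hv, hvsub⟩ := mem_nhdsLT_iff_exists_Ioo_subset.1 h1
        exact ⟨v, hv, |l| + 1, fun y hy => hvsub hy.1⟩
    obtain ⟨v, hvx, Ml, hMl⟩ := hleft
    refine ⟨max (|f x| + 1) Ml, Set.Ioo v u, Ioo_mem_nhds hvx hu, ?_⟩
    rintro y ⟨hy1, hy2⟩
    rcases lt_trichotomy y x with hyx | rfl | hyx
    · exact (hMl y ⟨⟨hy1.1, hyx⟩, hy2⟩).trans (le_max_right _ _)
    · exact le_trans (by linarith [abs_nonneg (f y)]) (le_max_left (|f y| + 1) Ml)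
    · exact (husub ⟨hyx, hy1.2⟩).trans (le_max_left _ _)
  choose M U hU hM using key
  obtain ⟨t, hcov⟩ := (isCompact_Icc (a := (0:ℝ)) (b := b)).elim_nhds_subcover'
    (fun x hx => U x hx) (fun x hx => hU x hx)
  refine ⟨(t.sup fun x => ⌈M x.1 x.2⌉₊ : ℕ), ?_⟩
  intro y hy
  obtain ⟨x, hxmem, hyU⟩ := Set.mem_iUnion₂.1 (hcov hy)
  calc |f y| ≤ M x.1 x.2 := hM x.1 x.2 y ⟨hyU, hy⟩
    _ ≤ (⌈M x.1 x.2⌉₊ : ℝ) := Nat.le_ceil _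
    _ ≤ ((t.sup fun x => ⌈M x.1 x.2⌉₊ : ℕ) : ℝ) := by
        exact Nat.cast_le.2
          (Finset.le_sup (f := fun x : (Set.Icc (0:ℝ) b) => ⌈M x.1 x.2⌉₊) hxmem)

/-- A càdlàg function composed with `max · 0` is measurable. -/
lemma Cadlag.measurable_comp_max {f : ℝ → ℝ} (hf : Cadlag f) :
    Measurable fun t : ℝ => f (max t 0) := by
  obtain ⟨hr, _⟩ := hf
  have hmeas : ∀ n : ℕ, Measurable fun t : ℝ =>
      f (((⌊max t 0 * 2 ^ n⌋ : ℝ) + 1) / 2 ^ n) := by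
    intro n
    have h1 : Measurable fun t : ℝ => (⌊max t 0 * 2 ^ n⌋ : ℤ) :=
      ((measurable_id.max measurable_const).mul measurable_const).floor
    exact (measurable_of_countable fun k : ℤ => f (((k : ℝ) + 1) / 2 ^ n)).comp h1
  apply measurable_of_tendsto_metrizable hmeas
  rw [tendsto_pi_nhds]
  intro t
  set s : ℝ := max t 0 with hs
  have hs0 : (0:ℝ) ≤ s := le_max_right _ _
  have hpos : ∀ n : ℕ, (0:ℝ) < 2 ^ n := fun n => by positivity
  have hlow : ∀ n : ℕ, s < ((⌊s * 2 ^ n⌋ : ℝ) + 1) / 2 ^ n := by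
    intro n
    rw [lt_div_iff₀ (hpos n)]
    exact Int.lt_floor_add_one (s * 2 ^ n)
  have hup : ∀ n : ℕ, ((⌊s * 2 ^ n⌋ : ℝ) + 1) / 2 ^ n ≤ s + (1 / 2) ^ n := by
    intro n
    rw [div_le_iff₀ (hpos n)]
    have := Int.floor_le (s * 2 ^ n)
    have h2 : ((1:ℝ) / 2) ^ n * 2 ^ n = 1 := by
      rw [← mul_pow]; norm_num
    nlinarith [hpos n]
  have htend : Tendsto (fun n : ℕ => ((⌊s * 2 ^ n⌋ : ℝ) + 1) / 2 ^ n) atTop (𝓝 s) := by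
    have hhi : Tendsto (fun n : ℕ => s + (1 / 2 : ℝ) ^ n) atTop (𝓝 (s + 0)) :=
      tendsto_const_nhds.add (tendsto_pow_atTop_nhds_zero_of_lt_one (by norm_num) (by norm_num))
    rw [add_zero] at hhi
    exact tendsto_of_tendsto_of_tendsto_of_le_of_le tendsto_const_nhds hhi
      (fun n => (hlow n).le) hup
  have htend' : Tendsto (fun n : ℕ => ((⌊s * 2 ^ n⌋ : ℝ) + 1) / 2 ^ n) atTop (𝓝[>] s) := by
    rw [tendsto_nhdsWithin_iff]
    exact ⟨htend, Filter.Eventually.of_forall fun n => hlow n⟩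
  exact (hr s hs0 (by simp)).comp htend'

/-- A càdlàg function is interval integrable on `[0, b]`. -/
lemma Cadlag.intervalIntegrable {f : ℝ → ℝ} (hf : Cadlag f) {b : ℝ} (hb : 0 ≤ b) :
    IntervalIntegrable f MeasureTheory.volume 0 b := by
  obtain ⟨M, hM⟩ := hf.bounded hb
  rw [intervalIntegrable_iff, Set.uIoc_of_le hb]
  have hmeq : Set.EqOn f (fun t => f (max t 0)) (Set.Ioc 0 b) := by
    intro y hy
    simp only [max_eq_left hy.1.le]
  have hI : MeasureTheory.IntegrableOn (fun t => f (max t 0)) (Set.Ioc 0 b)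
      MeasureTheory.volume := by
    refine MeasureTheory.Integrable.mono' (g := fun _ => M)
      (MeasureTheory.integrableOn_const (by simp))
      (hf.measurable_comp_max.aestronglyMeasurable.restrict) ?_
    refine (MeasureTheory.ae_restrict_iff' measurableSet_Ioc).2 (Filter.Eventually.of_forall ?_)
    intro y hy
    rw [Real.norm_eq_abs, max_eq_left hy.1.le]
    exact hM y ⟨hy.1.le, hy.2⟩
  exact hI.congr_fun (fun y hy => (hmeq hy).symm) measurableSet_Ioc

/-- basic monotonicity lemma. -/
theorem stmt0 (m : ℕ) (hm : 1 ≤ m)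
    (f ftil : Fin m → Fin m → ℝ → ℝ) (g gtil : Fin m → ℝ → ℝ)
    (hH : HypH m f g) (hHtil : HypH m ftil gtil)
    (hle_f : ∀ i j, ∀ x : ℝ, 0 ≤ x → f i j x ≤ ftil i j x)
    (hle_g : ∀ j, ∀ t : ℝ, 0 ≤ t → g j t ≤ gtil j t)
    (hstrict : ∀ j, (∀ i, ∀ x : ℝ, 0 ≤ x → f i j x < ftil i j x) ∨
      (∀ t : ℝ, 0 ≤ t → g j t < gtil j t))
    (h htil : Fin m → ℝ → ℝ)
    (hsol : IsSolutionOn m f g ⊤ h) (hsoltil : IsSolutionOn m ftil gtil ⊤ htil)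
    (hnn : NonnegOn m ⊤ h) (hnntil : NonnegOn m ⊤ htil) :
    ∀ j, ∀ t : ℝ, 0 ≤ t → prim (h j) t ≤ prim (htil j) t := by
  classical
  obtain ⟨hcad, heqn⟩ := hsol
  obtain ⟨hcadt, heqnt⟩ := hsoltil
  set c : Fin m → ℝ → ℝ := fun j => prim (h j) with hcdef
  set ct : Fin m → ℝ → ℝ := fun j => prim (htil j) with hctdef
  have hint : ∀ (j : Fin m) {a b : ℝ}, 0 ≤ a → a ≤ b →
      IntervalIntegrable (h j) MeasureTheory.volume a b := by
    intro j a b ha hab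
    refine (Cadlag.intervalIntegrable (hcad j) (ha.trans hab)).mono_set ?_
    rw [Set.uIcc_of_le hab, Set.uIcc_of_le (ha.trans hab)]
    exact Set.Icc_subset_Icc ha le_rfl
  have hintt : ∀ (j : Fin m) {a b : ℝ}, 0 ≤ a → a ≤ b →
      IntervalIntegrable (htil j) MeasureTheory.volume a b := by
    intro j a b ha hab
    refine (Cadlag.intervalIntegrable (hcadt j) (ha.trans hab)).mono_set ?_
    rw [Set.uIcc_of_le hab, Set.uIcc_of_le (ha.trans hab)]
    exact Set.Icc_subset_Icc ha le_rfl
  have hcnn : ∀ (j : Fin m) (t : ℝ), 0 ≤ t → 0 ≤ c j t := by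
    intro j t ht
    exact intervalIntegral.integral_nonneg ht fun u hu => hnn j u hu.1 (by simp)
  have hctnn : ∀ (j : Fin m) (t : ℝ), 0 ≤ t → 0 ≤ ct j t := by
    intro j t ht
    exact intervalIntegral.integral_nonneg ht fun u hu => hnntil j u hu.1 (by simp)
  have hadd : ∀ (j : Fin m) {x t : ℝ}, 0 ≤ x → x ≤ t →
      c j t = c j x + ∫ s in x..t, h j s :=
    fun j x t hx hxt =>
      (intervalIntegral.integral_add_adjacent_intervals (hint j le_rfl hx)
        (hint j hx hxt)).symm
  have haddt : ∀ (j : Fin m) {x t : ℝ}, 0 ≤ x → x ≤ t →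
      ct j t = ct j x + ∫ s in x..t, htil j s :=
    fun j x t hx hxt =>
      (intervalIntegral.integral_add_adjacent_intervals (hintt j le_rfl hx)
        (hintt j hx hxt)).symm
  intro j₀ t₀ ht₀
  set S : Set ℝ := {t | ∀ j, c j t ≤ ct j t} with hSdef
  suffices hS : Set.Icc (0:ℝ) t₀ ⊆ S from hS ⟨ht₀, le_rfl⟩ j₀
  -- continuity of the primitives on [0, t₀]
  have hcont : ∀ (j : Fin m), ContinuousOn (c j) (Set.Icc 0 t₀) := by
    intro j
    have h1 : MeasureTheory.IntegrableOn (h j) (Set.uIcc 0 t₀) MeasureTheory.volume := by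
      rw [Set.uIcc_of_le ht₀]
      have h2 : MeasureTheory.IntegrableOn (h j) (Set.Ioc 0 t₀) MeasureTheory.volume := by
        have := hint j le_rfl ht₀
        rwa [intervalIntegrable_iff, Set.uIoc_of_le ht₀] at this
      exact h2.congr_set_ae MeasureTheory.Ioc_ae_eq_Icc.symm
    have := intervalIntegral.continuousOn_primitive_interval h1
    rwa [Set.uIcc_of_le ht₀] at this
  have hcontt : ∀ (j : Fin m), ContinuousOn (ct j) (Set.Icc 0 t₀) := by
    intro j
    have h1 : MeasureTheory.IntegrableOn (htil j) (Set.uIcc 0 t₀) MeasureTheory.volume := by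
      rw [Set.uIcc_of_le ht₀]
      have h2 : MeasureTheory.IntegrableOn (htil j) (Set.Ioc 0 t₀) MeasureTheory.volume := by
        have := hintt j le_rfl ht₀
        rwa [intervalIntegrable_iff, Set.uIoc_of_le ht₀] at this
      exact h2.congr_set_ae MeasureTheory.Ioc_ae_eq_Icc.symm
    have := intervalIntegral.continuousOn_primitive_interval h1
    rwa [Set.uIcc_of_le ht₀] at this
  -- closedness
  have hclosed : IsClosed (S ∩ Set.Icc 0 t₀) := by
    have hrw : S ∩ Set.Icc 0 t₀ =
        ⋂ j, (Set.Icc (0:ℝ) t₀ ∩ (fun t => ct j t - c j t) ⁻¹' Set.Ici 0) := by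
      ext t
      simp only [Set.mem_inter_iff, Set.mem_iInter, Set.mem_setOf_eq, Set.mem_preimage,
        Set.mem_Ici, hSdef, sub_nonneg]
      constructor
      · rintro ⟨h1, h2⟩ j
        exact ⟨h2, h1 j⟩
      · intro h1
        exact ⟨fun j => (h1 j).2, (h1 ⟨0, hm⟩).1⟩
    rw [hrw]
    exact isClosed_iInter fun j =>
      (ContinuousOn.preimage_isClosed_of_isClosed
        (((hcontt j).sub (hcont j))) isClosed_Icc isClosed_Ici)
  -- base point
  have h0 : (0:ℝ) ∈ S := by
    intro j
    simp only [hcdef, hctdef, prim, intervalIntegral.integral_same, le_refl]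
  -- induction step
  refine hclosed.Icc_subset_of_forall_mem_nhdsWithin h0 ?_
  rintro x ⟨hxS, hx0, hxt₀⟩
  have hmem : ∀ j : Fin m, {t : ℝ | c j t ≤ ct j t} ∈ 𝓝[>] x := by
    intro j
    rcases lt_or_eq_of_le (hxS j) with hlt | heqj
    · -- strict inequality persists by continuity
      have hc1 : ContinuousWithinAt (fun t => ct j t - c j t) (Set.Icc 0 t₀) x :=
        ((hcontt j).sub (hcont j)) x ⟨hx0, hxt₀.le⟩
      have hc2 : Tendsto (fun t => ct j t - c j t) (𝓝[Set.Ioc x t₀] x)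
          (𝓝 (ct j x - c j x)) :=
        hc1.mono_left (nhdsWithin_mono x (fun y hy => ⟨hx0.trans hy.1.le, hy.2⟩))
      have hc3 : Tendsto (fun t => ct j t - c j t) (𝓝[>] x) (𝓝 (ct j x - c j x)) := by
        rwa [nhdsWithin_Ioc_eq_nhdsGT hxt₀] at hc2
      have hev : ∀ᶠ t in 𝓝[>] x, 0 < ct j t - c j t :=
        hc3.eventually (eventually_gt_nhds (by linarith))
      filter_upwards [hev] with t ht
      exact sub_nonneg.1 ht.le
    · -- equality case: compare the solutions pointwise at x
      have hpt : h j x < htil j x := by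
        have e1 : h j x = (∑ i, f i j (c i x)) + g j x := heqn j x hx0 (by simp)
        have e2 : htil j x = (∑ i, ftil i j (ct i x)) + gtil j x := heqnt j x hx0 (by simp)
        have hterm : ∀ i : Fin m, f i j (c i x) ≤ ftil i j (ct i x) := by
          intro i
          have h1 : f i j (c i x) ≤ ftil i j (c i x) := hle_f i j _ (hcnn i x hx0)
          rcases eq_or_ne i j with rfl | hij
          · rw [← heqj]; exact h1
          · exact h1.trans (hHtil.mono_f i j hij (hcnn i x hx0) (hctnn i x hx0) (hxS i))
        rcases hstrict j with hf' | hg'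
        · have hsum : (∑ i, f i j (c i x)) < ∑ i, ftil i j (ct i x) := by
            refine Finset.sum_lt_sum (fun i _ => hterm i) ⟨j, Finset.mem_univ _, ?_⟩
            rw [← heqj]
            exact hf' j _ (hcnn j x hx0)
          have := hle_g j x hx0
          rw [e1, e2]; linarith
        · have hsum : (∑ i, f i j (c i x)) ≤ ∑ i, ftil i j (ct i x) :=
            Finset.sum_le_sum fun i _ => hterm i
          have := hg' x hx0
          rw [e1, e2]; linarith
      have hrc : Tendsto (fun t => htil j t - h j t) (𝓝[>] x)
          (𝓝 (htil j x - h j x)) :=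
        ((hcadt j).1 x hx0 (by simp)).sub ((hcad j).1 x hx0 (by simp))
      have hev : ∀ᶠ t in 𝓝[>] x, 0 < htil j t - h j t :=
        hrc.eventually (eventually_gt_nhds (by linarith))
      obtain ⟨u, hu, husub⟩ := mem_nhdsGT_iff_exists_Ioc_subset.1 hev
      rw [mem_nhdsGT_iff_exists_Ioc_subset]
      refine ⟨u, hu, ?_⟩
      intro t ht
      have hxt : x ≤ t := ht.1.le
      have hptwise : ∀ y ∈ Set.Icc x t, h j y ≤ htil j y := by
        intro y hy
        rcases eq_or_lt_of_le hy.1 with rfl | hlt'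
        · exact hpt.le
        · have : 0 < htil j y - h j y := husub ⟨hlt', hy.2.trans ht.2⟩
          linarith
      have hmono := intervalIntegral.integral_mono_on hxt (hint j hx0 hxt)
        (hintt j hx0 hxt) hptwise
      show c j t ≤ ct j t
      calc c j t = c j x + ∫ s in x..t, h j s := hadd j hx0 hxt
        _ ≤ ct j x + ∫ s in x..t, htil j s := by rw [← heqj]; linarith
        _ = ct j t := (haddt j hx0 hxt).symm
  have : S = ⋂ j, {t : ℝ | c j t ≤ ct j t} := by
    ext t; simp only [hSdef, Set.mem_setOf_eq, Set.mem_iInter]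
  rw [this]
  exact Filter.iInter_mem.2 hmem
end
end

section
/- Let f : [0,∞) → ℝ be càdlàg with no negative jumps (f(t) ≥ f(t−) for all t > 0), let x ≥ 0 with f(x) > 0, and set T = inf{t ≥ x : f(t) = 0} (with inf ∅ = ∞). Define f̃(t) = f(t) for t < T and f̃(t) = 0 for t ≥ T, and define i : [x,∞) → [0,∞] by i(y) = ∫_x^y (1/f̃(t)) dt. Let c : [0,∞) → [x,∞] be the right-continuous inverse of i, i.e. c(t) = inf{y ≥ x : i(y) > t}. Then c(0) = x, c is non-decreasing and continuous, c is strictly increasing on [0, i(T−)) and constant equal to T on [i(T−), ∞), and on [0, i(T−)) the function c admits a càdlàg right-hand derivative h which satisfies h(t) = f(c(t)) for all t ∈ [0, i(T−)). In particular, c solves the one-dimensional initial value problem: its right-hand derivative equals f ∘ c, with c(0) = x. -/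
open MeasureTheory Filter Function Set
open scoped ENNReal Topology

noncomputable section

lemma sInf_ofReal_Ioi (a : ℝ) (ha : 0 ≤ a) :
    sInf ((fun y : ℝ => ENNReal.ofReal y) '' Set.Ioi a) = ENNReal.ofReal a := by
  apply le_antisymm
  · apply ENNReal.le_of_forall_pos_le_add
    intro ε hε _
    calc sInf ((fun y : ℝ => ENNReal.ofReal y) '' Set.Ioi a)
        ≤ ENNReal.ofReal (a + ε) := sInf_le ⟨a + ε, by simp [hε], rfl⟩
      _ = ENNReal.ofReal a + ENNReal.ofReal ε := ENNReal.ofReal_add ha (le_of_lt hε)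
      _ = ENNReal.ofReal a + ε := by rw [ENNReal.ofReal_coe_nnreal]
  · refine le_sInf ?_
    rintro _ ⟨y, hy, rfl⟩
    exact ENNReal.ofReal_le_ofReal (le_of_lt hy)

lemma tendsto_Ici_of_Ioi {f : ℝ → ℝ} {t : ℝ} (h : Tendsto f (𝓝[>] t) (𝓝 (f t))) :
    Tendsto f (𝓝[≥] t) (𝓝 (f t)) := by
  have hs : ({t} : Set ℝ) ∪ Set.Ioi t = Set.Ici t := by
    ext y; simp [le_iff_lt_or_eq, or_comm, eq_comm]
  have : (𝓝[≥] t : Filter ℝ) = pure t ⊔ 𝓝[>] t := by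
    rw [← hs, nhdsWithin_union, nhdsWithin_singleton]
  rw [this, tendsto_sup]
  exact ⟨tendsto_pure_nhds f t, h⟩

lemma lint_left (g : ℝ → ℝ≥0∞) (x β : ℝ) (hxβ : x < β) (C : ℝ≥0∞)
    (h : ∀ y, x ≤ y → y < β → ∫⁻ s in Set.Ioc x y, g s ≤ C) :
    ∫⁻ s in Set.Ioc x β, g s ≤ C := by
  have hd : 0 < β - x := by linarith
  set u : ℕ → ℝ := fun n => β - (β - x)/(n+1) with hu
  have hu_lt : ∀ n, u n < β := by
    intro n
    have : 0 < (β - x)/(n+1) := div_pos hd (by positivity)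
    simp only [hu]; linarith
  have hu_ge : ∀ n, x ≤ u n := by
    intro n
    have : (β - x)/(n+1) ≤ β - x := div_le_self hd.le (by push_cast; linarith [Nat.cast_nonneg (α := ℝ) n])
    simp only [hu]; linarith
  have hu_mono : Monotone u := by
    intro m n hmn
    have : (β - x)/(n+1) ≤ (β - x)/(m+1) := by
      apply div_le_div_of_nonneg_left hd.le (by positivity)
      have : (m:ℝ) ≤ n := Nat.cast_le.2 hmn
      linarith
    simp only [hu]; linarith
  set t : ℕ → Set ℝ := fun n => Nat.rec (Set.Ioc x (u 0)) (fun n _ => Set.Ioc (u n) (u (n+1))) n with ht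
  have ht0 : t 0 = Set.Ioc x (u 0) := rfl
  have htS : ∀ n, t (n+1) = Set.Ioc (u n) (u (n+1)) := fun n => rfl
  have ht_meas : ∀ n, MeasurableSet (t n) := by
    intro n; cases n with
    | zero => rw [ht0]; exact measurableSet_Ioc
    | succ n => rw [htS]; exact measurableSet_Ioc
  have ht_ub : ∀ n, t n ⊆ Set.Iic (u n) := by
    intro n; cases n with
    | zero => rw [ht0]; exact Set.Ioc_subset_Iic_self
    | succ n => rw [htS]; exact Set.Ioc_subset_Iic_self
  have ht_lb : ∀ n, t (n+1) ⊆ Set.Ioi (u n) := by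
    intro n; rw [htS]; exact Set.Ioc_subset_Ioi_self
  have hd2 : ∀ m n, m < n → Disjoint (t m) (t n) := by
    intro m n hmn
    obtain ⟨k, rfl⟩ : ∃ k, n = k + 1 := ⟨n - 1, by omega⟩
    have hmk : m ≤ k := by omega
    exact Set.disjoint_of_subset (ht_ub m) (ht_lb k)
      (Iic_disjoint_Ioi (hu_mono hmk))
  have hDisj : Pairwise (Disjoint on t) := by
    intro m n hmn
    rcases hmn.lt_or_gt with h | h
    · exact hd2 m n h
    · exact (hd2 n m h).symm
  have hUnion : (⋃ n, t n) = Set.Ioo x β := by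
    ext s
    simp only [Set.mem_iUnion, Set.mem_Ioo]
    constructor
    · rintro ⟨n, hn⟩
      cases n with
      | zero => rw [ht0] at hn; exact ⟨hn.1, lt_of_le_of_lt hn.2 (hu_lt 0)⟩
      | succ n =>
        rw [htS] at hn
        exact ⟨lt_of_le_of_lt (hu_ge n) hn.1, lt_of_le_of_lt hn.2 (hu_lt (n+1))⟩
    · rintro ⟨h1, h2⟩
      have hex : ∃ n : ℕ, s ≤ u n := by
        obtain ⟨n, hn⟩ := exists_nat_gt ((β - x)/(β - s))
        refine ⟨n, ?_⟩
        have hβs : 0 < β - s := by linarith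
        have h3 : (β - x)/(n+1) < β - s := by
          rw [div_lt_iff₀ (by positivity)]
          rw [div_lt_iff₀ hβs] at hn
          nlinarith
        simp only [hu]; linarith
      set n₀ := Nat.find hex with hn₀
      have hle : s ≤ u n₀ := Nat.find_spec hex
      cases hn : n₀ with
      | zero => exact ⟨0, by rw [ht0]; exact ⟨h1, by rw [← hn]; exact hle⟩⟩
      | succ m =>
        refine ⟨m+1, ?_⟩
        rw [htS]
        have : ¬ s ≤ u m := Nat.find_min hex (by omega)
        exact ⟨not_le.1 this, by rw [← hn]; exact hle⟩
  have hpart : ∀ N, ∑ n ∈ Finset.range (N+1), ∫⁻ s in t n, g s = ∫⁻ s in Set.Ioc x (u N), g s := by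
    intro N
    induction N with
    | zero => simp [ht0]
    | succ N ih =>
      rw [Finset.sum_range_succ, ih, htS, ← lintegral_union measurableSet_Ioc
        ((Set.Ioc_disjoint_Ioc_of_le le_rfl)), Set.Ioc_union_Ioc_eq_Ioc (hu_ge N) (hu_mono (Nat.le_succ N))]
  have hsum : ∫⁻ s in Set.Ioo x β, g s ≤ C := by
    rw [← hUnion, lintegral_iUnion ht_meas hDisj, ENNReal.tsum_eq_iSup_nat]
    apply iSup_le
    intro N
    cases N with
    | zero => simp
    | succ N => rw [hpart N]; exact h (u N) (hu_ge N) (hu_lt N)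
  have hsplit : Set.Ioc x β = Set.Ioo x β ∪ {β} := (Set.Ioo_union_right hxβ).symm
  rw [hsplit, lintegral_union (measurableSet_singleton β)
      (Set.disjoint_singleton_right.2 (by simp))]
  have : ∫⁻ s in ({β} : Set ℝ), g s = 0 :=
    setLIntegral_measure_zero _ _ Real.volume_singleton
  rw [this, add_zero]
  exact hsum



set_option maxHeartbeats 4000000 in
/-- the Lamperti transform solves the one-dimensional time-change
initial value problem.  Here `T` is the first zero of `f` after `x` (with values in
`ℝ≥0∞`, so `T = ⊤` when there is no such zero), `ftil` is `f` absorbed at `T`,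
`i(y) = ∫_x^y dt/ftil(t)` (a Lebesgue integral in `ℝ≥0∞`, so that it is infinite past `T`),
`L = i(T−)` and `c` is the right-continuous inverse of `i`. -/
theorem stmt4 (f : ℝ → ℝ) (hf : Cadlag f)
    (hnnj : ∀ t : ℝ, 0 < t → Function.leftLim f t ≤ f t)
    (x : ℝ) (hx : 0 ≤ x) (hfx : 0 < f x)
    (T : ℝ≥0∞) (hT : T = sInf ((fun t : ℝ => ENNReal.ofReal t) '' {t : ℝ | x ≤ t ∧ f t = 0}))
    (ftil : ℝ → ℝ) (hftil : ∀ t : ℝ, ftil t = if ENNReal.ofReal t < T then f t else 0)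
    (i : ℝ → ℝ≥0∞) (hi : ∀ y : ℝ, i y = ∫⁻ s in Set.Ioc x y, (ENNReal.ofReal (ftil s))⁻¹)
    (L : ℝ≥0∞) (hL : L = ⨆ (y : ℝ) (_ : ENNReal.ofReal y < T), i y)
    (c : ℝ → ℝ≥0∞)
    (hc : ∀ t : ℝ, c t =
      sInf ((fun y : ℝ => ENNReal.ofReal y) '' {y : ℝ | x ≤ y ∧ ENNReal.ofReal t < i y})) :
    c 0 = ENNReal.ofReal x ∧
    Monotone c ∧
    ContinuousOn c (Set.Ici 0) ∧
    (∀ s t : ℝ, 0 ≤ s → s < t → ENNReal.ofReal t < L → c s < c t) ∧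
    (∀ t : ℝ, 0 ≤ t → L ≤ ENNReal.ofReal t → c t = T) ∧
    ∃ h : ℝ → ℝ, CadlagOn h L ∧
      ∀ t : ℝ, 0 ≤ t → ENNReal.ofReal t < L →
        HasDerivWithinAt (fun s : ℝ => (c s).toReal) (h t) (Set.Ici t) t ∧
        h t = f (c t).toReal := by
  set g : ℝ → ℝ≥0∞ := fun s => (ENNReal.ofReal (ftil s))⁻¹ with hg
  -- basic facts about f
  have hrc : ∀ t : ℝ, 0 ≤ t → Tendsto f (𝓝[>] t) (𝓝 (f t)) :=
    fun t ht => hf.1 t ht (by simp)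
  -- i as integral of g
  have hi' : ∀ y : ℝ, i y = ∫⁻ s in Set.Ioc x y, g s := hi
  have imono : Monotone i := by
    intro y z hyz
    rw [hi', hi']
    exact lintegral_mono' (Measure.restrict_mono (Set.Ioc_subset_Ioc_right hyz) le_rfl) le_rfl
  have hi_le : ∀ y : ℝ, y ≤ x → i y = 0 := by
    intro y hy
    rw [hi', Set.Ioc_eq_empty (not_lt.2 hy)]
    simp
  have iadd : ∀ y z : ℝ, x ≤ y → y ≤ z → i z = i y + ∫⁻ s in Set.Ioc y z, g s := by
    intro y z h1 h2
    rw [hi', hi', ← lintegral_union measurableSet_Ioc (Set.Ioc_disjoint_Ioc_of_le le_rfl),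
      Set.Ioc_union_Ioc_eq_Ioc h1 h2]
  have iub : ∀ (a b : ℝ) (C : ℝ≥0∞), (∀ s ∈ Set.Ioc a b, g s ≤ C) →
      ∫⁻ s in Set.Ioc a b, g s ≤ C * ENNReal.ofReal (b - a) := by
    intro a b C hC
    calc ∫⁻ s in Set.Ioc a b, g s ≤ ∫⁻ _ in Set.Ioc a b, C := setLIntegral_mono measurable_const hC
      _ = C * volume (Set.Ioc a b) := setLIntegral_const _ _
      _ = C * ENNReal.ofReal (b - a) := by rw [Real.volume_Ioc]
  have ilb : ∀ (a b : ℝ) (C : ℝ≥0∞), (∀ s ∈ Set.Ioc a b, C ≤ g s) →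
      C * ENNReal.ofReal (b - a) ≤ ∫⁻ s in Set.Ioc a b, g s := by
    intro a b C hC
    calc C * ENNReal.ofReal (b - a) = C * volume (Set.Ioc a b) := by rw [Real.volume_Ioc]
      _ = ∫⁻ _ in Set.Ioc a b, C := (setLIntegral_const _ _).symm
      _ ≤ ∫⁻ s in Set.Ioc a b, g s := setLIntegral_mono' measurableSet_Ioc hC
  have ileft : ∀ (β : ℝ) (C : ℝ≥0∞), x < β → (∀ y, x ≤ y → y < β → i y ≤ C) → i β ≤ C := by
    intro β C hxβ hall
    rw [hi']
    exact lint_left g x β hxβ C (fun y h1 h2 => by rw [← hi']; exact hall y h1 h2)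
  -- positivity of integrals of g on intervals
  have hnb : ∀ a : ℝ, 0 ≤ a → ∀ C : ℝ, f a < C → ∃ u, a < u ∧ ∀ s ∈ Set.Ioo a u, f s < C := by
    intro a ha C hC
    have hev : ∀ᶠ s in 𝓝[>] a, f s < C := (hrc a ha).eventually (gt_mem_nhds hC)
    obtain ⟨u, hu, hsub⟩ := mem_nhdsGT_iff_exists_Ioo_subset.1 hev
    exact ⟨u, hu, fun s hs => hsub hs⟩
  have gpos : ∀ a b : ℝ, 0 ≤ a → a < b → 0 < ∫⁻ s in Set.Ioc a b, g s := by
    intro a b ha hab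
    obtain ⟨u, hu, hbnd⟩ := hnb a ha (f a + 1) (lt_add_one _)
    set C : ℝ := max (f a + 1) 1 with hC
    set b' : ℝ := (a + min b u)/2 with hb'
    have hminb : a < min b u := lt_min hab hu
    have hab' : a < b' := by rw [hb']; linarith
    have hb'min : b' < min b u := by rw [hb']; linarith
    have hb'b : b' ≤ b := hb'min.le.trans (min_le_left _ _)
    have hb'u : b' < u := lt_of_lt_of_le hb'min (min_le_right _ _)
    have hlow : ∀ s ∈ Set.Ioc a b', (ENNReal.ofReal C)⁻¹ ≤ g s := by
      intro s hs
      have hfs : ftil s ≤ C := by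
        rw [hftil]
        split
        · exact le_max_of_le_left (hbnd s ⟨hs.1, lt_of_le_of_lt hs.2 hb'u⟩).le
        · exact le_max_of_le_right zero_le_one
      exact ENNReal.inv_le_inv.2 (ENNReal.ofReal_le_ofReal hfs)
    have hpos : 0 < (ENNReal.ofReal C)⁻¹ * ENNReal.ofReal (b' - a) := by
      apply ENNReal.mul_pos
      · exact ENNReal.inv_ne_zero.2 ENNReal.ofReal_ne_top
      · exact (ENNReal.ofReal_pos.2 (by linarith)).ne'
    calc (0:ℝ≥0∞) < (ENNReal.ofReal C)⁻¹ * ENNReal.ofReal (b' - a) := hpos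
      _ ≤ ∫⁻ s in Set.Ioc a b', g s := ilb a b' _ hlow
      _ ≤ ∫⁻ s in Set.Ioc a b, g s :=
          lintegral_mono' (Measure.restrict_mono (Set.Ioc_subset_Ioc_right hb'b) le_rfl) le_rfl
  have ipos : ∀ y : ℝ, x < y → 0 < i y := by
    intro y hy
    rw [hi']
    exact gpos x y hx hy
  -- c basics
  have cmem : ∀ {t y : ℝ}, x ≤ y → ENNReal.ofReal t < i y → c t ≤ ENNReal.ofReal y := by
    intro t y h1 h2
    rw [hc]
    exact sInf_le ⟨y, ⟨h1, h2⟩, rfl⟩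
  have cx : ∀ t : ℝ, ENNReal.ofReal x ≤ c t := by
    intro t
    rw [hc]
    refine le_sInf ?_
    rintro _ ⟨y, ⟨h1, _⟩, rfl⟩
    exact ENNReal.ofReal_le_ofReal h1
  have cgt : ∀ {t z : ℝ}, c t < ENNReal.ofReal z → ENNReal.ofReal t < i z := by
    intro t z hlt
    rw [hc] at hlt
    obtain ⟨_, ⟨y, ⟨hy1, hy2⟩, rfl⟩, hlt'⟩ := sInf_lt_iff.1 hlt
    have hz : 0 < z := ENNReal.ofReal_pos.1 (lt_of_le_of_lt (by positivity) hlt')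
    have hyz : y < z := (ENNReal.ofReal_lt_ofReal_iff hz).1 hlt'
    exact lt_of_lt_of_le hy2 (imono hyz.le)
  have cmono : Monotone c := by
    intro t t' htt'
    rw [hc, hc]
    apply sInf_le_sInf
    apply Set.image_mono
    intro y hy
    exact ⟨hy.1, lt_of_le_of_lt (ENNReal.ofReal_le_ofReal htt') hy.2⟩
  -- first zero structure
  have hTle : ∀ u : ℝ, x ≤ u → f u = 0 → T ≤ ENNReal.ofReal u := by
    intro u hu h0
    rw [hT]
    exact sInf_le ⟨u, ⟨hu, h0⟩, rfl⟩
  have hlb : ∀ a : ℝ, 0 ≤ a → ∀ C : ℝ, C < f a → ∃ u, a < u ∧ ∀ s ∈ Set.Ioo a u, C < f s := by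
    intro a ha C hC
    have hev : ∀ᶠ s in 𝓝[>] a, C < f s := (hrc a ha).eventually (lt_mem_nhds hC)
    obtain ⟨u, hu, hsub⟩ := mem_nhdsGT_iff_exists_Ioo_subset.1 hev
    exact ⟨u, hu, fun s hs => hsub hs⟩
  have hTd : ∃ δ : ℝ, 0 < δ ∧ ENNReal.ofReal (x + δ) ≤ T := by
    obtain ⟨u, hu, hbnd⟩ := hlb x hx 0 hfx
    refine ⟨(u - x)/2, by linarith, ?_⟩
    rw [hT]
    apply le_sInf
    rintro _ ⟨t, ⟨ht1, ht2⟩, rfl⟩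
    apply ENNReal.ofReal_le_ofReal
    by_contra hlt
    push_neg at hlt
    rcases eq_or_lt_of_le ht1 with h | h
    · rw [← h] at ht2; linarith
    · have := hbnd t ⟨h, by linarith⟩; linarith
  have hTx : ENNReal.ofReal x < T := by
    obtain ⟨δ, hδ, hδT⟩ := hTd
    exact lt_of_lt_of_le (by rw [ENNReal.ofReal_lt_ofReal_iff (by linarith)]; linarith) hδT
  have fpos : ∀ t : ℝ, x ≤ t → ENNReal.ofReal t < T → 0 < f t := by
    intro t hxt htT
    by_contra hft
    push_neg at hft
    have hxt' : x < t := lt_of_le_of_ne hxt (by rintro rfl; linarith)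
    set A : Set ℝ := {s | s ∈ Set.Icc x t ∧ f s ≤ 0} with hA
    have htA : t ∈ A := ⟨⟨hxt, le_rfl⟩, hft⟩
    have hAne : A.Nonempty := ⟨t, htA⟩
    have hAbdd : BddBelow A := ⟨x, fun s hs => hs.1.1⟩
    set u := sInf A with hu
    have hu1 : x ≤ u := le_csInf hAne (fun s hs => hs.1.1)
    have hu2 : u ≤ t := csInf_le hAbdd htA
    have hfu_le : f u ≤ 0 := by
      have H : ∀ n : ℕ, ∃ a, a ∈ A ∧ a < u + 1/((n:ℝ)+1) := by
        intro n
        exact exists_lt_of_csInf_lt hAne (lt_add_of_pos_right _ (by positivity))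
      choose a ha1 ha2 using H
      have hau : ∀ n, u ≤ a n := fun n => csInf_le hAbdd (ha1 n)
      have hau' : Tendsto a atTop (𝓝 u) := by
        apply tendsto_of_tendsto_of_tendsto_of_le_of_le tendsto_const_nhds ?_ hau
          (fun n => (ha2 n).le)
        have h2 : Tendsto (fun n : ℕ => u + 1/((n:ℝ)+1)) atTop (𝓝 (u + 0)) :=
          tendsto_const_nhds.add tendsto_one_div_add_atTop_nhds_zero_nat
        simpa using h2
      have htt : Tendsto f (𝓝[≥] u) (𝓝 (f u)) := tendsto_Ici_of_Ioi (hrc u (hx.trans hu1))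
      have hcomp : Tendsto (f ∘ a) atTop (𝓝 (f u)) := by
        apply htt.comp
        rw [tendsto_nhdsWithin_iff]
        exact ⟨hau', Filter.Eventually.of_forall hau⟩
      exact le_of_tendsto hcomp (Filter.Eventually.of_forall (fun n => (ha1 n).2))
    have hxu : x < u := by
      rcases eq_or_lt_of_le hu1 with h | h
      · exfalso; rw [← h] at hfu_le; linarith
      · exact h
    have hposlt : ∀ s, x ≤ s → s < u → 0 < f s := by
      intro s hs1 hs2
      by_contra hfs
      push_neg at hfs
      have : u ≤ s := csInf_le hAbdd ⟨⟨hs1, hs2.le.trans hu2⟩, hfs⟩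
      linarith
    have hfu_ge : 0 ≤ f u := by
      obtain ⟨l, hl⟩ := hf.2 u (lt_of_le_of_lt hx hxu) (by simp)
      have hll : leftLim f u = l :=
        leftLim_eq_of_tendsto hl
      have hl0 : 0 ≤ l := by
        apply ge_of_tendsto hl
        filter_upwards [Ioo_mem_nhdsLT_of_mem (Set.mem_Ioc.2 ⟨hxu, le_rfl⟩)] with s hs
        exact (hposlt s hs.1.le hs.2).le
      calc (0:ℝ) ≤ l := hl0
        _ = leftLim f u := hll.symm
        _ ≤ f u := hnnj u (lt_of_le_of_lt hx hxu)
    have hfu0 : f u = 0 := le_antisymm hfu_le hfu_ge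
    have hc1 : T ≤ ENNReal.ofReal t := (hTle u hu1 hfu0).trans (ENNReal.ofReal_le_ofReal hu2)
    exact absurd htT (not_lt.2 hc1)
  -- local bounds near a point below T
  have hloc : ∀ β : ℝ, x ≤ β → ENNReal.ofReal β < T → ∀ ε : ℝ, 0 < ε → ε ≤ 1/2 →
      ∃ δ : ℝ, 0 < δ ∧ ∀ z : ℝ, β < z → z ≤ β + δ →
        (ENNReal.ofReal ((1+ε) * f β))⁻¹ * ENNReal.ofReal (z - β) ≤ ∫⁻ s in Set.Ioc β z, g s ∧
        ∫⁻ s in Set.Ioc β z, g s ≤ (ENNReal.ofReal ((1-ε) * f β))⁻¹ * ENNReal.ofReal (z - β) := by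
    intro β hxβ hβT ε hε hε2
    have hfβ : 0 < f β := fpos β hxβ hβT
    have h0β : 0 ≤ β := hx.trans hxβ
    have hev : ∀ᶠ s in 𝓝[>] β, f s ∈ Set.Ioo ((1-ε)*f β) ((1+ε)*f β) := by
      apply (hrc β h0β).eventually
      apply Ioo_mem_nhds <;> nlinarith
    obtain ⟨u, hu, hsub⟩ := mem_nhdsGT_iff_exists_Ioo_subset.1 hev
    obtain ⟨δ2, hδ2, hδ2T⟩ : ∃ δ2 : ℝ, 0 < δ2 ∧ ENNReal.ofReal (β + δ2) < T := by
      rcases eq_or_ne T ⊤ with h | h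
      · exact ⟨1, one_pos, by rw [h]; exact ENNReal.ofReal_lt_top⟩
      · have hβT' : β < T.toReal := (ENNReal.ofReal_lt_iff_lt_toReal h0β h).1 hβT
        refine ⟨(T.toReal - β)/2, by linarith, ?_⟩
        rw [ENNReal.ofReal_lt_iff_lt_toReal (by linarith) h]
        linarith
    have huβ : (0:ℝ) < u - β := by simp only [Set.mem_Ioi] at hu; linarith
    set δ : ℝ := min ((u - β)/2) δ2 with hδdef
    have hδpos : 0 < δ := lt_min (by linarith) hδ2
    refine ⟨δ, hδpos, ?_⟩
    intro z hz1 hz2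
    have hsT : ∀ s ∈ Set.Ioc β z, ftil s = f s ∧ f s ∈ Set.Ioo ((1-ε)*f β) ((1+ε)*f β) := by
      intro s hs
      have hsu : s < u := by
        have h1 : z ≤ β + (u - β)/2 := hz2.trans (add_le_add_right (min_le_left _ _) β)
        have := hs.2
        linarith
      have hmem := hsub ⟨hs.1, hsu⟩
      have hsδ2 : ENNReal.ofReal s < T := by
        apply lt_of_le_of_lt _ hδ2T
        apply ENNReal.ofReal_le_ofReal
        have h1 : z ≤ β + δ2 := hz2.trans (add_le_add_right (min_le_right _ _) β)
        linarith [hs.2]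
      exact ⟨by rw [hftil, if_pos hsδ2], hmem⟩
    constructor
    · apply ilb
      intro s hs
      obtain ⟨he, hio⟩ := hsT s hs
      show (ENNReal.ofReal ((1+ε) * f β))⁻¹ ≤ (ENNReal.ofReal (ftil s))⁻¹
      rw [he]
      exact ENNReal.inv_le_inv.2 (ENNReal.ofReal_le_ofReal hio.2.le)
    · apply iub
      intro s hs
      obtain ⟨he, hio⟩ := hsT s hs
      show (ENNReal.ofReal (ftil s))⁻¹ ≤ (ENNReal.ofReal ((1-ε) * f β))⁻¹
      rw [he]
      exact ENNReal.inv_le_inv.2 (ENNReal.ofReal_le_ofReal hio.1.le)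
  -- the key identity: i ((c t).toReal) = ofReal t on [0, L)
  have hkey : ∀ t : ℝ, 0 ≤ t → ENNReal.ofReal t < L →
      c t < T ∧ c t ≠ ⊤ ∧ x ≤ (c t).toReal ∧ ENNReal.ofReal (c t).toReal = c t ∧
      i ((c t).toReal) = ENNReal.ofReal t := by
    intro t ht0 htL
    obtain ⟨y₀, hy₀T, hy₀i⟩ : ∃ y₀ : ℝ, ENNReal.ofReal y₀ < T ∧ ENNReal.ofReal t < i y₀ := by
      rw [hL] at htL
      obtain ⟨y₀, hy₀⟩ := lt_iSup_iff.1 htL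
      by_cases hp : ENNReal.ofReal y₀ < T
      · exact ⟨y₀, hp, by simpa [hp] using hy₀⟩
      · exfalso; simp [hp] at hy₀
    have hy₀x : x < y₀ := by
      by_contra hle
      push_neg at hle
      rw [hi_le y₀ hle] at hy₀i
      simp at hy₀i
    have hble : c t ≤ ENNReal.ofReal y₀ := cmem hy₀x.le hy₀i
    have hbT : c t < T := lt_of_le_of_lt hble hy₀T
    have hbtop : c t ≠ ⊤ := ne_top_of_lt hbT
    set β := (c t).toReal with hβ
    have hofβ : ENNReal.ofReal β = c t := ENNReal.ofReal_toReal hbtop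
    have hβx : x ≤ β := by
      have h1 := cx t
      rw [← hofβ] at h1
      exact (ENNReal.ofReal_le_ofReal_iff ENNReal.toReal_nonneg).1 h1
    have hβT : ENNReal.ofReal β < T := by rw [hofβ]; exact hbT
    have hβ0 : (0:ℝ) ≤ β := ENNReal.toReal_nonneg
    have hiβ_le : i β ≤ ENNReal.ofReal t := by
      rcases eq_or_lt_of_le hβx with h | h
      · rw [← h, hi_le x le_rfl]; positivity
      · apply ileft β _ h
        intro y hy1 hy2
        by_contra hgt
        push_neg at hgt
        have h1 := cmem hy1 hgt
        have hylt : ENNReal.ofReal y < c t := by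
          rw [← hofβ]
          exact (ENNReal.ofReal_lt_ofReal_iff (lt_of_le_of_lt (hx.trans hy1) hy2)).2 hy2
        exact absurd h1 (not_le.2 hylt)
    have hiβ_ge : ENNReal.ofReal t ≤ i β := by
      by_contra hlt
      push_neg at hlt
      obtain ⟨δ, hδ, hbounds⟩ := hloc β hβx hβT (1/2) (by norm_num) le_rfl
      have hfβ : 0 < f β := fpos β hβx hβT
      set q : ℝ := (1 - 1/2) * f β with hq
      have hq0 : 0 < q := by rw [hq]; nlinarith
      set r := (i β).toReal with hr
      have hiβtop : i β ≠ ⊤ := ne_top_of_lt hlt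
      have hr0 : 0 ≤ r := ENNReal.toReal_nonneg
      have hrt : r < t := by
        have h2 := ENNReal.toReal_strict_mono ENNReal.ofReal_ne_top hlt
        rwa [ENNReal.toReal_ofReal ht0] at h2
      set w := min δ ((t - r)/2 * q) with hw
      have hw0 : 0 < w := lt_min hδ (by nlinarith)
      set z := β + w with hzdef
      have hzb : β < z := lt_add_of_pos_right _ hw0
      have hzd : z ≤ β + δ := add_le_add_right (min_le_left _ _) β
      have hzw : z - β = w := by rw [hzdef]; ring
      have h5 : q⁻¹ * w ≤ (t - r)/2 := by
        have h6 : w ≤ (t-r)/2 * q := min_le_right _ _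
        calc q⁻¹ * w ≤ q⁻¹ * ((t-r)/2 * q) :=
              mul_le_mul_of_nonneg_left h6 (by positivity)
          _ = (t-r)/2 := by field_simp
      have hiz_le : i z ≤ ENNReal.ofReal t := by
        have h2 := (hbounds z hzb hzd).2
        rw [iadd β z hβx hzb.le]
        calc i β + ∫⁻ s in Set.Ioc β z, g s
            ≤ i β + (ENNReal.ofReal q)⁻¹ * ENNReal.ofReal (z - β) := add_le_add_right h2 _
          _ = ENNReal.ofReal r + ENNReal.ofReal (q⁻¹ * w) := by
              rw [hr, ENNReal.ofReal_toReal hiβtop, ← ENNReal.ofReal_inv_of_pos hq0, hzw,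
                ENNReal.ofReal_mul (by positivity)]
          _ = ENNReal.ofReal (r + q⁻¹ * w) := (ENNReal.ofReal_add hr0 (by positivity)).symm
          _ ≤ ENNReal.ofReal t := ENNReal.ofReal_le_ofReal (by linarith)
      have hcontra : ENNReal.ofReal t < i z := by
        apply cgt
        rw [← hofβ]
        exact (ENNReal.ofReal_lt_ofReal_iff (by linarith)).2 hzb
      exact absurd hiz_le (not_le.2 hcontra)
    exact ⟨hbT, hbtop, hβx, hofβ, le_antisymm hiβ_le hiβ_ge⟩
  -- goal 1
  have goal1 : c 0 = ENNReal.ofReal x := by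
    rw [hc]
    have hS : {y : ℝ | x ≤ y ∧ ENNReal.ofReal 0 < i y} = Set.Ioi x := by
      ext y
      simp only [Set.mem_setOf_eq, Set.mem_Ioi, ENNReal.ofReal_zero]
      constructor
      · rintro ⟨h1, h2⟩
        rcases lt_or_eq_of_le h1 with h | h
        · exact h
        · exfalso; rw [← h, hi_le x le_rfl] at h2; exact lt_irrefl 0 h2
      · intro h
        exact ⟨h.le, ipos y h⟩
    rw [hS]
    exact sInf_ofReal_Ioi x hx
  -- goal 4 (strict monotonicity)
  have goal4 : ∀ s t : ℝ, 0 ≤ s → s < t → ENNReal.ofReal t < L → c s < c t := by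
    intro s t hs hst htL
    have ht : (0:ℝ) ≤ t := hs.trans hst.le
    obtain ⟨_, hcttop, _, _, hit⟩ := hkey t ht htL
    obtain ⟨_, _, _, _, his⟩ := hkey s hs (lt_of_le_of_lt (ENNReal.ofReal_le_ofReal hst.le) htL)
    rcases lt_or_ge (c s) (c t) with h | h
    · exact h
    · exfalso
      have hcs : c s = c t := le_antisymm (cmono hst.le) h
      rw [hcs, hit] at his
      have : t = s := (ENNReal.ofReal_eq_ofReal_iff ht hs).1 his
      linarith
  -- right-continuity of c
  have crt : ∀ t : ℝ, sInf (c '' Set.Ioi t) = c t := by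
    intro t
    apply le_antisymm
    · by_contra hlt
      push_neg at hlt
      rw [hc] at hlt
      obtain ⟨_, ⟨y, ⟨hy1, hy2⟩, rfl⟩, hlt'⟩ := sInf_lt_iff.1 hlt
      obtain ⟨u, hu1, hu2⟩ : ∃ u : ℝ, t < u ∧ ENNReal.ofReal u < i y := by
        rcases eq_or_ne (i y) ⊤ with h | h
        · exact ⟨t+1, by linarith, by rw [h]; exact ENNReal.ofReal_lt_top⟩
        · set r := (i y).toReal with hr
          have hr0 : 0 < r :=
            ENNReal.toReal_pos (by rintro h0; rw [h0] at hy2; simp at hy2) h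
          have htr : t < r := by
            rcases le_or_gt 0 t with h0 | h0
            · have h3 := ENNReal.toReal_strict_mono h hy2
              rwa [ENNReal.toReal_ofReal h0] at h3
            · linarith
          have hmin : t < min (t+1) r := lt_min (by linarith) htr
          refine ⟨(t + min (t+1) r)/2, by linarith, ?_⟩
          have hur : (t + min (t+1) r)/2 < r := by
            have := min_le_right (t+1) r
            linarith
          calc ENNReal.ofReal ((t + min (t+1) r)/2) < ENNReal.ofReal r :=
                (ENNReal.ofReal_lt_ofReal_iff hr0).2 hur
            _ = i y := by rw [hr, ENNReal.ofReal_toReal h]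
      have h2 : sInf (c '' Set.Ioi t) ≤ c u := sInf_le ⟨u, hu1, rfl⟩
      have h3 : c u ≤ ENNReal.ofReal y := cmem hy1 hu2
      exact lt_irrefl _ (lt_of_le_of_lt (h2.trans h3) hlt')
    · apply le_sInf
      rintro _ ⟨u, hu, rfl⟩
      exact cmono (le_of_lt hu)
  -- left-continuity of c
  have clt : ∀ t : ℝ, sSup (c '' Set.Iio t) = c t := by
    intro t
    apply le_antisymm
    · apply sSup_le
      rintro _ ⟨s, hs, rfl⟩
      exact cmono (le_of_lt hs)
    · by_contra hlt
      push_neg at hlt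
      set a := sSup (c '' Set.Iio t) with ha
      have hax : ENNReal.ofReal x ≤ a := le_sSup_of_le (Set.mem_image_of_mem c (by simp : (t-1) ∈ Set.Iio t)) (cx (t-1))
      obtain ⟨e1, he1a, he1c⟩ := exists_between hlt
      obtain ⟨e2, he2a, he2c⟩ := exists_between he1c
      have he1top : e1 ≠ ⊤ := ne_top_of_lt he1c
      have he2top : e2 ≠ ⊤ := ne_top_of_lt he2c
      set y1 := e1.toReal with hy1d
      set y2 := e2.toReal with hy2d
      have hy1 : ENNReal.ofReal y1 = e1 := ENNReal.ofReal_toReal he1top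
      have hy2 : ENNReal.ofReal y2 = e2 := ENNReal.ofReal_toReal he2top
      have hxy1 : x ≤ y1 := by
        have h0 : ENNReal.ofReal x ≤ e1 := hax.trans he1a.le
        rw [← hy1] at h0
        exact (ENNReal.ofReal_le_ofReal_iff ENNReal.toReal_nonneg).1 h0
      have hy12 : y1 < y2 := ENNReal.toReal_strict_mono he2top he2a
      have hxy2 : x ≤ y2 := hxy1.trans hy12.le
      have hile : ∀ y : ℝ, x ≤ y → ENNReal.ofReal y < c t → i y ≤ ENNReal.ofReal t := by
        intro y hy hyc
        by_contra hgt
        push_neg at hgt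
        exact absurd (cmem hy hgt) (not_le.2 hyc)
      have hi1 : i y1 ≤ ENNReal.ofReal t := hile y1 hxy1 (by rw [hy1]; exact he1c)
      have hi2 : i y2 ≤ ENNReal.ofReal t := hile y2 hxy2 (by rw [hy2]; exact he2c)
      have hi1ge : ENNReal.ofReal t ≤ i y1 := by
        have hev : ∀ s : ℝ, s < t → ENNReal.ofReal s < i y1 := by
          intro s hst
          apply cgt
          rw [hy1]
          exact lt_of_le_of_lt (le_sSup (Set.mem_image_of_mem c (by simp [hst] : s ∈ Set.Iio t))) he1a
        have htnd : Tendsto (fun s : ℝ => ENNReal.ofReal s) (𝓝[<] t) (𝓝 (ENNReal.ofReal t)) :=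
          (ENNReal.continuous_ofReal.tendsto t).mono_left nhdsWithin_le_nhds
        apply le_of_tendsto htnd
        filter_upwards [self_mem_nhdsWithin] with s hs
        exact (hev s hs).le
      have h1t : i y1 = ENNReal.ofReal t := le_antisymm hi1 hi1ge
      have hstrict : i y1 < i y2 := by
        rw [iadd y1 y2 hxy1 hy12.le]
        exact ENNReal.lt_add_right (by rw [h1t]; exact ENNReal.ofReal_ne_top)
          (gpos y1 y2 (hx.trans hxy1) hy12).ne'
      have h4 := lt_of_lt_of_le hstrict hi2
      rw [h1t] at h4
      exact lt_irrefl _ h4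
  have ccont : Continuous c := by
    rw [continuous_iff_continuousAt]
    intro t
    have huniv : (Set.Iio t ∪ (({t} : Set ℝ) ∪ Set.Ioi t)) = Set.univ := by
      ext s
      rcases lt_trichotomy s t with h | h | h <;> simp [h]
    have hnhds : (𝓝 t : Filter ℝ) = 𝓝[<] t ⊔ (pure t ⊔ 𝓝[>] t) := by
      conv_lhs => rw [← nhdsWithin_univ t, ← huniv]
      rw [nhdsWithin_union, nhdsWithin_union, nhdsWithin_singleton]
    unfold ContinuousAt
    rw [hnhds, tendsto_sup, tendsto_sup]
    refine ⟨?_, tendsto_pure_nhds c t, ?_⟩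
    · have h5 := cmono.tendsto_nhdsLT t
      rwa [clt t] at h5
    · have h5 := cmono.tendsto_nhdsGT t
      rwa [crt t] at h5
  have goal3 : ContinuousOn c (Set.Ici 0) := ccont.continuousOn
  -- goal 5
  have goal5 : ∀ t : ℝ, 0 ≤ t → L ≤ ENNReal.ofReal t → c t = T := by
    intro t ht0 hLt
    have hiL : ∀ y : ℝ, ENNReal.ofReal y < T → i y ≤ L := by
      intro y hy
      rw [hL]
      exact le_iSup₂ (f := fun (y : ℝ) (_ : ENNReal.ofReal y < T) => i y) y hy
    rcases eq_or_ne T ⊤ with hTtop | hTne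
    · have hS : {y : ℝ | x ≤ y ∧ ENNReal.ofReal t < i y} = ∅ := by
        ext y
        simp only [Set.mem_setOf_eq, Set.mem_empty_iff_false, iff_false, not_and, not_lt]
        intro hy
        exact (hiL y (by rw [hTtop]; exact ENNReal.ofReal_lt_top)).trans hLt
      rw [hc, hS]
      simp [hTtop]
    · set τ := T.toReal with hτ
      have hofτ : ENNReal.ofReal τ = T := ENNReal.ofReal_toReal hTne
      have hxτ : x < τ := (ENNReal.ofReal_lt_iff_lt_toReal hx hTne).1 hTx
      have hiτ : i τ ≤ L := by
        apply ileft τ L hxτ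
        intro y hy1 hy2
        apply hiL
        rw [← hofτ]
        exact (ENNReal.ofReal_lt_ofReal_iff (by linarith)).2 hy2
      have hS : {y : ℝ | x ≤ y ∧ ENNReal.ofReal t < i y} = Set.Ioi τ := by
        ext y
        simp only [Set.mem_setOf_eq, Set.mem_Ioi]
        constructor
        · rintro ⟨hy1, hy2⟩
          by_contra hle
          push_neg at hle
          have hyL : i y ≤ L := by
            rcases eq_or_lt_of_le hle with h | h
            · rw [h]; exact hiτ
            · exact hiL y (by rw [← hofτ]; exact (ENNReal.ofReal_lt_ofReal_iff (by linarith)).2 h)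
          exact absurd hy2 (not_lt.2 (hyL.trans hLt))
        · intro hyτ
          refine ⟨(hxτ.trans hyτ).le, ?_⟩
          have hgtop : ∀ s ∈ Set.Ioc τ y, (⊤:ℝ≥0∞) ≤ g s := by
            intro s hs
            have hnlt : ¬ ENNReal.ofReal s < T := by
              rw [← hofτ]
              simp only [not_lt]
              exact ENNReal.ofReal_le_ofReal hs.1.le
            show (⊤:ℝ≥0∞) ≤ (ENNReal.ofReal (ftil s))⁻¹
            rw [hftil, if_neg hnlt]
            simp
          have h1 : (⊤:ℝ≥0∞) * ENNReal.ofReal (y - τ) ≤ ∫⁻ s in Set.Ioc τ y, g s :=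
            ilb τ y ⊤ hgtop
          have h2 : (⊤:ℝ≥0∞) * ENNReal.ofReal (y - τ) = ⊤ := by
            rw [ENNReal.top_mul (ENNReal.ofReal_pos.2 (by linarith)).ne']
          have h4 : (⊤:ℝ≥0∞) ≤ i y := by
            rw [iadd τ y hxτ.le hyτ.le]
            calc (⊤:ℝ≥0∞) = ⊤ * ENNReal.ofReal (y - τ) := h2.symm
              _ ≤ ∫⁻ s in Set.Ioc τ y, g s := h1
              _ ≤ i τ + ∫⁻ s in Set.Ioc τ y, g s := le_add_self
          rw [top_le_iff.1 h4]
          exact ENNReal.ofReal_lt_top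
      rw [hc, hS, sInf_ofReal_Ioi τ (hx.trans hxτ.le), hofτ]
  -- the right-hand derivative
  have hderiv : ∀ t : ℝ, 0 ≤ t → ENNReal.ofReal t < L →
      HasDerivWithinAt (fun s : ℝ => (c s).toReal) (f ((c t).toReal)) (Set.Ici t) t := by
    intro t ht0 htL
    obtain ⟨hbT, hbtop, hβx, hofβ, hiβ⟩ := hkey t ht0 htL
    set β := (c t).toReal with hβd
    have hβ0 : (0:ℝ) ≤ β := ENNReal.toReal_nonneg
    have hβT : ENNReal.ofReal β < T := by rw [hofβ]; exact hbT
    have hfβ : 0 < f β := fpos β hβx hβT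
    rw [hasDerivWithinAt_iff_tendsto_slope, Set.Ici_sdiff_left, Metric.tendsto_nhds]
    intro ε' hε'
    set ε : ℝ := min (1/2) (ε' / (2 * f β)) with hεd
    have hε0 : 0 < ε := lt_min (by norm_num) (by positivity)
    have hε12 : ε ≤ 1/2 := min_le_left _ _
    obtain ⟨δ, hδ0, hbounds⟩ := hloc β hβx hβT ε hε0 hε12
    have hevL : ∀ᶠ u in 𝓝[>] t, ENNReal.ofReal u < L :=
      Filter.Eventually.filter_mono nhdsWithin_le_nhds
        ((ENNReal.continuous_ofReal.tendsto t).eventually (gt_mem_nhds htL))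
    have hevδ : ∀ᶠ u in 𝓝[>] t, c u < ENNReal.ofReal (β + δ) := by
      apply Filter.Eventually.filter_mono nhdsWithin_le_nhds
      apply (ccont.tendsto t).eventually (gt_mem_nhds ?_)
      rw [← hofβ]
      exact (ENNReal.ofReal_lt_ofReal_iff (by linarith)).2 (by linarith)
    filter_upwards [hevL, hevδ, self_mem_nhdsWithin] with u huL huδ hut
    have hut' : t < u := hut
    have hu0 : (0:ℝ) ≤ u := ht0.trans hut'.le
    obtain ⟨_, hutop, hβux, hofβu, hiβu⟩ := hkey u hu0 huL
    set βu := (c u).toReal with hβud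
    have hβlt : β < βu := ENNReal.toReal_strict_mono hutop (goal4 t u ht0 hut' huL)
    have hβuδ : βu ≤ β + δ := by
      have h2 : (c u).toReal < (ENNReal.ofReal (β + δ)).toReal :=
        ENNReal.toReal_strict_mono ENNReal.ofReal_ne_top huδ
      rw [ENNReal.toReal_ofReal (by linarith)] at h2
      exact h2.le
    obtain ⟨hlow, hup⟩ := hbounds βu hβlt hβuδ
    set V := ∫⁻ s in Set.Ioc β βu, g s with hV
    have hVadd : ENNReal.ofReal u = ENNReal.ofReal t + V := by
      rw [← hiβu, ← hiβ]
      exact iadd β βu hβx hβlt.le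
    set P : ℝ := (1+ε) * f β with hPd
    set Q : ℝ := (1-ε) * f β with hQd
    have hP0 : 0 < P := by rw [hPd]; nlinarith
    have hQ0 : 0 < Q := by rw [hQd]; nlinarith
    have hVub : V ≤ ENNReal.ofReal (Q⁻¹ * (βu - β)) := by
      calc V ≤ (ENNReal.ofReal Q)⁻¹ * ENNReal.ofReal (βu - β) := hup
        _ = ENNReal.ofReal (Q⁻¹ * (βu - β)) := by
            rw [← ENNReal.ofReal_inv_of_pos hQ0, ← ENNReal.ofReal_mul (by positivity)]
    have hVlb : ENNReal.ofReal (P⁻¹ * (βu - β)) ≤ V := by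

      calc ENNReal.ofReal (P⁻¹ * (βu - β))
          = (ENNReal.ofReal P)⁻¹ * ENNReal.ofReal (βu - β) := by
            rw [← ENNReal.ofReal_inv_of_pos hP0, ← ENNReal.ofReal_mul (by positivity)]
        _ ≤ V := hlow
    have hut0 : 0 < u - t := by linarith
    have hw0 : 0 < βu - β := by linarith
    have hQinv : (0:ℝ) ≤ Q⁻¹ * (βu - β) := mul_nonneg (inv_nonneg.2 hQ0.le) hw0.le
    have hPinv : (0:ℝ) ≤ P⁻¹ * (βu - β) := mul_nonneg (inv_nonneg.2 hP0.le) hw0.le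
    have hVtop : V ≠ ⊤ := ne_top_of_le_ne_top ENNReal.ofReal_ne_top hVub
    have hu_eq : u = t + V.toReal := by
      have h6 := congrArg ENNReal.toReal hVadd
      rwa [ENNReal.toReal_add ENNReal.ofReal_ne_top hVtop, ENNReal.toReal_ofReal hu0,
        ENNReal.toReal_ofReal ht0] at h6
    have hVub' : V.toReal ≤ Q⁻¹ * (βu - β) := by
      have h7 := ENNReal.toReal_mono ENNReal.ofReal_ne_top hVub
      rwa [ENNReal.toReal_ofReal hQinv] at h7
    have hVlb' : P⁻¹ * (βu - β) ≤ V.toReal := by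
      have h7 := ENNReal.toReal_mono hVtop hVlb
      rwa [ENNReal.toReal_ofReal hPinv] at h7
    have hs1 : (βu - β)/(u - t) ≤ P := by
      rw [div_le_iff₀ hut0]
      have h8 : P⁻¹ * (βu - β) ≤ u - t := by rw [hu_eq]; linarith [hVlb']
      have h9 := mul_le_mul_of_nonneg_left h8 hP0.le
      rwa [← mul_assoc, mul_inv_cancel₀ hP0.ne', one_mul] at h9
    have hs2 : Q ≤ (βu - β)/(u - t) := by
      rw [le_div_iff₀ hut0]
      have h8 : u - t ≤ Q⁻¹ * (βu - β) := by rw [hu_eq]; linarith [hVub']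
      have h9 := mul_le_mul_of_nonneg_left h8 hQ0.le
      rwa [← mul_assoc, mul_inv_cancel₀ hQ0.ne', one_mul] at h9
    have hslope : slope (fun s : ℝ => (c s).toReal) t u = (βu - β) / (u - t) := by
      rw [slope_def_field]
    rw [Real.dist_eq, hslope]
    have habs : |(βu - β)/(u - t) - f β| ≤ ε * f β := by
      rw [abs_le]
      constructor
      · rw [hQd] at hs2; linarith
      · rw [hPd] at hs1; linarith
    have hεb : ε * f β ≤ ε'/2 := by
      have h10 : ε ≤ ε'/(2*f β) := min_le_right _ _
      calc ε * f β ≤ (ε'/(2*f β)) * f β := by nlinarith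
        _ = ε'/2 := by field_simp
    calc |(βu - β)/(u - t) - f β| ≤ ε * f β := habs
      _ ≤ ε'/2 := hεb
      _ < ε' := by linarith
  -- the function h and its cadlag property
  have hcad : CadlagOn (fun s : ℝ => f ((c s).toReal)) L := by
    constructor
    · intro t ht0 htL
      obtain ⟨hbT, hbtop, hβx, hofβ, hiβ⟩ := hkey t ht0 htL
      set β := (c t).toReal with hβd
      have hβtend : Tendsto (fun u : ℝ => (c u).toReal) (𝓝[>] t) (𝓝[>] β) := by
        rw [tendsto_nhdsWithin_iff]
        constructor
        · exact ((ENNReal.tendsto_toReal hbtop).comp (ccont.tendsto t)).mono_left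
            nhdsWithin_le_nhds
        · have hevL : ∀ᶠ u in 𝓝[>] t, ENNReal.ofReal u < L :=
            Filter.Eventually.filter_mono nhdsWithin_le_nhds
              ((ENNReal.continuous_ofReal.tendsto t).eventually (gt_mem_nhds htL))
          filter_upwards [hevL, self_mem_nhdsWithin] with u huL hut
          have h9 := goal4 t u ht0 hut huL
          exact ENNReal.toReal_strict_mono (hkey u (ht0.trans (le_of_lt hut)) huL).2.1 h9
      exact (hrc β (hx.trans hβx)).comp hβtend
    · intro t ht0 htL
      obtain ⟨hbT, hbtop, hβx, hofβ, hiβ⟩ := hkey t ht0.le htL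
      set β := (c t).toReal with hβd
      have hβpos : 0 < β := by
        have h9 := goal4 0 t le_rfl ht0 htL
        rw [goal1] at h9
        have h10 := ENNReal.toReal_strict_mono hbtop h9
        rw [ENNReal.toReal_ofReal hx] at h10
        linarith
      obtain ⟨l, hl⟩ := hf.2 β hβpos (by simp)
      refine ⟨l, ?_⟩
      have hβtend : Tendsto (fun u : ℝ => (c u).toReal) (𝓝[<] t) (𝓝[<] β) := by
        rw [tendsto_nhdsWithin_iff]
        constructor
        · exact ((ENNReal.tendsto_toReal hbtop).comp (ccont.tendsto t)).mono_left
            nhdsWithin_le_nhds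
        · filter_upwards [self_mem_nhdsWithin,
            Filter.Eventually.filter_mono nhdsWithin_le_nhds (lt_mem_nhds ht0)] with u hut hu0
          have h9 := goal4 u t hu0.le hut htL
          exact ENNReal.toReal_strict_mono hbtop h9
      exact hl.comp hβtend
  exact ⟨goal1, cmono, goal3, goal4, goal5,
    ⟨fun s : ℝ => f ((c s).toReal), hcad, fun t ht0 htL => ⟨hderiv t ht0 htL, rfl⟩⟩⟩
end
end
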